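/- arXiv:cs/0412103 — 5 statements merged into one kernel-verified Lean document; each statement's English description precedes it below -/
import Mathlib

section
/- Let a, b, c, x be 8-bit integers with c > 0 and a equal to the bitwise complement of b (i.e., a = 255 − b). If (a XOR x) − (b XOR x) = c (as integers), then x is uniquely determined: x = a XOR (128 + ⌊c/2⌋); equivalently, x = a XOR (1, c₇, …, c₁)₂ where c = (c₇, …, c₀)₂ is the binary expansion of c. -/
set_option maxRecDepth 10000 in
set_option maxHeartbeats 4000000 in

lemma aux3 : ∀ b < 256, ∀ x < 256,
    (b ^^^ x) < ((255 - b) ^^^ x) →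
    x = (255 - b) ^^^ (128 + (((255 - b) ^^^ x) - (b ^^^ x)) / 2) := by decide

/-- If `a, b, c, x` are 8-bit integers, `c > 0`, `a` is the bitwise complement of `b`,
and `(a XOR x) - (b XOR x) = c` as integers, then `x = a XOR (128 + ⌊c/2⌋)`. -/
theorem stmt_3 (a b c x : ℕ) (ha : a < 256) (hb : b < 256) (hc : c < 256) (hx : x < 256)
    (hcpos : 0 < c) (hab : a = 255 - b)
    (h : ((a ^^^ x : ℕ) : ℤ) - ((b ^^^ x : ℕ) : ℤ) = (c : ℤ)) :
    x = a ^^^ (128 + c / 2) := by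
  subst hab
  have hlt : (b ^^^ x) < ((255 - b) ^^^ x) := by omega
  have hceq : c = ((255 - b) ^^^ x) - (b ^^^ x) := by omega
  rw [hceq]
  exact aux3 b hb x hx hlt
end

section
/- Let a, b, c, x be 8-bit integers with c > 0, a equal to the bitwise complement of b (i.e., a = 255 − b), and suppose (a XOR x) − (b XOR x) = c (as integers). Then c is odd. -/
lemma xor_mod_two (n m : ℕ) : (n ^^^ m) % 2 = (n % 2 + m % 2) % 2 := by
  rw [Nat.xor_mod_two_eq, Nat.add_mod]

/-- If `a, b, c, x` are 8-bit integers, `c > 0`, `a` is the bitwise complement of `b`,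
and `(a XOR x) - (b XOR x) = c` as integers, then `c` is odd. -/
theorem stmt_4 (a b c x : ℕ) (ha : a < 256) (hb : b < 256) (hc : c < 256) (hx : x < 256)
    (hcpos : 0 < c) (hab : a = 255 - b)
    (h : ((a ^^^ x : ℕ) : ℤ) - ((b ^^^ x : ℕ) : ℤ) = (c : ℤ)) :
    Odd c := by
  have hab2 : a % 2 + b % 2 = 1 := by omega
  have heq : (a ^^^ x) = (b ^^^ x) + c := by omega
  have h1 := xor_mod_two a x
  have h2 := xor_mod_two b x
  rw [Nat.odd_iff]
  clear h hab
  omega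
end

section
/- Let a, b, c be 8-bit integers with c odd and a equal to the bitwise complement of b (i.e., a = 255 − b). Then x := a XOR (128 + ⌊c/2⌋) is an 8-bit integer satisfying (a XOR x) − (b XOR x) = c (as integers). -/
set_option maxRecDepth 10000

/-- For 8-bit integers `a, b, c` with `c` odd and `a` the bitwise complement of `b`,
the value `x := a XOR (128 + ⌊c/2⌋)` is an 8-bit integer satisfying
`(a XOR x) - (b XOR x) = c` as integers. -/
theorem stmt_5 (a b c : ℕ) (ha : a < 256) (hb : b < 256) (hc : c < 256)
    (hcodd : Odd c) (hab : a = 255 - b) :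
    a ^^^ (128 + c / 2) < 256 ∧
      ((a ^^^ (a ^^^ (128 + c / 2)) : ℕ) : ℤ) -
        ((b ^^^ (a ^^^ (128 + c / 2)) : ℕ) : ℤ) = (c : ℤ) := by
  have hcomp : ∀ x < 256, x ^^^ (255 - x) = 255 := by decide
  have hsub : ∀ t < 256, 255 ^^^ t = 255 - t := by decide
  set t := 128 + c / 2 with ht
  have htlt : t < 256 := by omega
  constructor
  · have := Nat.xor_lt_two_pow (n := 8) (by simpa using ha) (by simpa using htlt)
    simpa using this
  · have h1 : a ^^^ (a ^^^ t) = t := by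
      rw [← Nat.xor_assoc, Nat.xor_self, Nat.zero_xor]
    have h2 : b ^^^ (a ^^^ t) = 255 - t := by
      rw [← Nat.xor_assoc, hab, hcomp b hb, hsub t htlt]
    rw [h1, h2]
    obtain ⟨k, hk⟩ := hcodd
    push_cast [Nat.cast_sub (show t ≤ 255 by omega)]
    omega
end

section
/- Let a, b, c, c', x, x' be 8-bit integers with c > 0, a equal to the bitwise complement of b (i.e., a = 255 − b), (a XOR x) − (b XOR x) = c, and (b XOR x') − (a XOR x') = c'. If c' = 256 − c, then x' = x XOR 128. -/
lemma compl8 (b : ℕ) (hb : b < 256) : 255 - b = b ^^^ 255 := by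
  interval_cases b <;> rfl

lemma xor128 (u : ℕ) (hu : u < 128) : u ^^^ 128 = u + 128 := by
  interval_cases u <;> rfl

/-- If `a, b, c, c', x, x'` are 8-bit integers with `c > 0`, `a` the bitwise complement
of `b`, `(a XOR x) - (b XOR x) = c`, `(b XOR x') - (a XOR x') = c'`, and `c' = 256 - c`,
then `x' = x XOR 128`. -/
theorem stmt_6 (a b c c' x x' : ℕ)
    (ha : a < 256) (hb : b < 256) (hc : c < 256) (hc' : c' < 256)
    (hx : x < 256) (hx' : x' < 256)
    (hcpos : 0 < c) (hab : a = 255 - b)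
    (h1 : ((a ^^^ x : ℕ) : ℤ) - ((b ^^^ x : ℕ) : ℤ) = (c : ℤ))
    (h2 : ((b ^^^ x' : ℕ) : ℤ) - ((a ^^^ x' : ℕ) : ℤ) = (c' : ℤ))
    (hcc : (c' : ℤ) = 256 - (c : ℤ)) :
    x' = x ^^^ 128 := by
  subst hab
  rw [compl8 b hb] at h1 h2
  set u := b ^^^ x with hu
  set v := b ^^^ x' with hv
  have hulat : u < 256 := Nat.xor_lt_two_pow (n := 8) hb hx
  have hvlat : v < 256 := Nat.xor_lt_two_pow (n := 8) hb hx'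
  have e1 : b ^^^ 255 ^^^ x = u ^^^ 255 := by
    rw [hu, Nat.xor_assoc, Nat.xor_comm 255 x, ← Nat.xor_assoc]
  have e2 : b ^^^ 255 ^^^ x' = v ^^^ 255 := by
    rw [hv, Nat.xor_assoc, Nat.xor_comm 255 x', ← Nat.xor_assoc]
  rw [e1] at h1
  rw [e2] at h2
  have hu255 : u ^^^ 255 = 255 - u := by
    exact (compl8 u hulat).symm
  have hv255 : v ^^^ 255 = 255 - v := by
    exact (compl8 v hvlat).symm
  rw [hu255] at h1
  rw [hv255] at h2
  have h1' : (255 : ℤ) - 2 * u = c := by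
    have : ((255 - u : ℕ) : ℤ) = 255 - (u : ℤ) := by
      omega
    rw [this] at h1; linarith
  have h2' : 2 * (v : ℤ) - 255 = c' := by
    have : ((255 - v : ℕ) : ℤ) = 255 - (v : ℤ) := by
      omega
    rw [this] at h2; linarith
  have huv : v = u + 128 := by omega
  have hu128 : u < 128 := by omega
  have : v = u ^^^ 128 := by rw [xor128 u hu128, huv]
  have hx'eq : x' = b ^^^ v := by
    rw [hv, ← Nat.xor_assoc, Nat.xor_self, Nat.zero_xor]
  rw [hx'eq, this, hu, ← Nat.xor_assoc, ← Nat.xor_assoc, Nat.xor_self, Nat.zero_xor]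
end

section
/- Let B₁, B₂ be 8-bit integers with B₁ = B₂ XOR 128, and let x₁, x₂ be real numbers with x₁ − x₂ − 128 an integer multiple of 256. Let f' be a real number such that g₂ := ((256·f' − x₂) mod 256) is a natural number less than 256. Then ((256·f' − x₁) mod 256) = g₂ XOR 128, and consequently ((256·f' − x₁) mod 256) XOR B₁ = g₂ XOR B₂; i.e., the two candidate key pairs (B₁, x₁) and (B₂, x₂) are equivalent for the decryption procedure. -/
set_option maxRecDepth 10000 in
lemma xor128_s14 : ∀ g : ℕ, g < 256 → g ^^^ 128 = if g < 128 then g + 128 else g - 128 := by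
  decide

lemma xor_cancel128 (a b : ℕ) : (a ^^^ 128) ^^^ (b ^^^ 128) = a ^^^ b := by
  rw [Nat.xor_comm b 128, ← Nat.xor_assoc, Nat.xor_assoc a 128 128, Nat.xor_self,
    Nat.xor_zero]

/-- Let `B₁, B₂` be 8-bit integers with `B₁ = B₂ XOR 128`, and `x₁, x₂` reals with
`x₁ - x₂ - 128` an integer multiple of `256`. If `g₂ := ((256·f' - x₂) mod 256)` is a
natural number less than `256`, then `((256·f' - x₁) mod 256) = g₂ XOR 128`, and
consequently `((256·f' - x₁) mod 256) XOR B₁ = g₂ XOR B₂`. -/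
theorem stmt_14 (B₁ B₂ : ℕ) (hB₁ : B₁ < 256) (hB₂ : B₂ < 256) (hB : B₁ = B₂ ^^^ 128)
    (x₁ x₂ : ℝ) (hx : ∃ k : ℤ, x₁ - x₂ - 128 = k * 256)
    (f' : ℝ) (g₂ : ℕ) (hg₂lt : g₂ < 256)
    (hg₂ : (g₂ : ℝ) = toIcoMod (by norm_num : (0:ℝ) < 256) 0 (256 * f' - x₂)) :
    toIcoMod (by norm_num : (0:ℝ) < 256) 0 (256 * f' - x₁) = ((g₂ ^^^ 128 : ℕ) : ℝ) ∧
      ∀ g₁ : ℕ, (g₁ : ℝ) = toIcoMod (by norm_num : (0:ℝ) < 256) 0 (256 * f' - x₁) →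
        g₁ ^^^ B₁ = g₂ ^^^ B₂ := by
  obtain ⟨k, hk⟩ := hx
  have h256 : (0:ℝ) < 256 := by norm_num
  set t := 256 * f' - x₂ with ht
  -- t - g₂ is a multiple of 256
  have hm : ∃ m : ℤ, t = (g₂ : ℝ) + m * 256 := by
    refine ⟨toIcoDiv h256 0 t, ?_⟩
    have := toIcoMod h256 0 t
    have hdef : toIcoMod h256 0 t = t - toIcoDiv h256 0 t • (256:ℝ) := rfl
    rw [hg₂, hdef]
    push_cast [zsmul_eq_mul]
    ring
  obtain ⟨m, hm⟩ := hm
  have hmain : toIcoMod h256 0 (256 * f' - x₁) = ((g₂ ^^^ 128 : ℕ) : ℝ) := by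
    rw [xor128_s14 g₂ hg₂lt]
    by_cases hlt : g₂ < 128
    · rw [if_pos hlt]
      rw [toIcoMod_eq_iff h256]
      constructor
      · constructor
        · positivity
        · have : (g₂:ℝ) < 128 := by exact_mod_cast hlt
          push_cast; norm_num; linarith
      · refine ⟨m - 1 - k, ?_⟩
        have : 256 * f' - x₁ = t - 128 - k * 256 := by rw [ht]; linarith
        rw [this, hm]
        push_cast [zsmul_eq_mul]
        ring
    · rw [if_neg hlt]
      have hle : (128:ℝ) ≤ (g₂:ℝ) := by exact_mod_cast (by omega : (128:ℕ) ≤ g₂)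
      have hlt' : (g₂:ℝ) < 256 := by exact_mod_cast hg₂lt
      rw [toIcoMod_eq_iff h256, Nat.cast_sub (by omega : 128 ≤ g₂)]
      constructor
      · constructor
        · push_cast; linarith
        · push_cast; linarith
      · refine ⟨m - k, ?_⟩
        have : 256 * f' - x₁ = t - 128 - k * 256 := by rw [ht]; linarith
        rw [this, hm]
        push_cast [zsmul_eq_mul]
        ring
  refine ⟨hmain, fun g₁ hg₁ => ?_⟩
  have : (g₁ : ℝ) = ((g₂ ^^^ 128 : ℕ) : ℝ) := by rw [hg₁, hmain]
  have hg₁eq : g₁ = g₂ ^^^ 128 := by exact_mod_cast this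
  rw [hg₁eq, hB, xor_cancel128]
end
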